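/- (Theorem 4.1, Euclidean case.) Let p̄ ∈ F and suppose ψ_u : E → ℝ (u = 1,…,t) are convex at p̄ and directionally differentiable at p̄, and the interval-valued objectives φ_s (s = 1,…,l) are LU-convex at p̄ and weakly directionally differentiable at p̄. Suppose there exist scalars λ_s > 0 (s = 1,…,l) and μ_u ≥ 0 (u = 1,…,t) such that: (i) for every p ∈ E, −(Σ_{s=1}^l λ_s φ_s'(p̄; p − p̄)) ⊖_g (Σ_{u=1}^t μ_u ψ_u'(p̄; p − p̄)) ≤_LU [0, 0], where φ_s'(p̄; w) denotes the gH-directional derivative interval [min{(φ_s^L)'(p̄; w), (φ_s^U)'(p̄; w)}, max{(φ_s^L)'(p̄; w), (φ_s^U)'(p̄; w)}], the sum Σ λ_s φ_s' is the interval [Σ λ_s min{(φ_s^L)', (φ_s^U)'}, Σ λ_s max{(φ_s^L)', (φ_s^U)'}], the real number Σ μ_u ψ_u' is treated as a degenerate interval, and condition (i) is equivalent to the two inequalities Σ_{s=1}^l λ_s min{(φ_s^L)'(p̄; p − p̄), (φ_s^U)'(p̄; p − p̄)} + Σ_{u=1}^t μ_u ψ_u'(p̄; p − p̄) ≥ 0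 and Σ_{s=1}^l λ_s max{(φ_s^L)'(p̄; p − p̄), (φ_s^U)'(p̄; p − p̄)} + Σ_{u=1}^t μ_u ψ_u'(p̄; p − p̄) ≥ 0; and (ii) μ_u ψ_u(p̄) = 0 for all u. Then p̄ is a type-I Pareto optimal solution of (MIVOP2). -/
import Mathlib


/-- One-sided directional derivative of `f` at `p` in direction `w`, with value `d`. -/
def HasDirDeriv {V : Type*} [NormedAddCommGroup V] [NormedSpace ℝ V]
    (f : V → ℝ) (p w : V) (d : ℝ) : Prop :=
  Filter.Tendsto (fun α : ℝ => (f (p + α • w) - f p) / α)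
    (nhdsWithin 0 (Set.Ioi 0)) (nhds d)

/-- `f` is convex at the point `p` (relative to the convex set `E`). -/
def ConvexAtPt {V : Type*} [NormedAddCommGroup V] [NormedSpace ℝ V]
    (E : Set V) (f : V → ℝ) (p : V) : Prop :=
  ∀ q ∈ E, ∀ α : ℝ, 0 ≤ α → α ≤ 1 →
    f ((1 - α) • p + α • q) ≤ (1 - α) * f p + α * f q

/-- `f` (with directional-derivative function `f'` at `pbar`) is pseudo-convex at `pbar`. -/
def PseudoConvexAt {V : Type*} [NormedAddCommGroup V] [NormedSpace ℝ V]
    (E : Set V) (f : V → ℝ) (f' : V → ℝ) (pbar : V) : Prop :=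
  ∀ p ∈ E, f p < f pbar → f' (p - pbar) < 0

/-- `f` (with directional-derivative function `f'` at `pbar`) is strictly
pseudo-convex at `pbar`. -/
def StrictPseudoConvexAt {V : Type*} [NormedAddCommGroup V] [NormedSpace ℝ V]
    (E : Set V) (f : V → ℝ) (f' : V → ℝ) (pbar : V) : Prop :=
  ∀ p ∈ E, p ≠ pbar → f p ≤ f pbar → f' (p - pbar) < 0

/-- `[aL, aU] ≤_LU [bL, bU]`. -/
def LUle (aL aU bL bU : ℝ) : Prop := aL ≤ bL ∧ aU ≤ bU

/-- `[aL, aU] <_LU [bL, bU]`. -/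
def LUlt (aL aU bL bU : ℝ) : Prop := LUle aL aU bL bU ∧ (aL ≠ bL ∨ aU ≠ bU)

/-- `[aL, aU] ≤_CW [bL, bU]`. -/
def CWle (aL aU bL bU : ℝ) : Prop :=
  (aL + aU) / 2 ≤ (bL + bU) / 2 ∧ (aU - aL) / 2 ≤ (bU - bL) / 2

/-- `[aL, aU] <_CW [bL, bU]`. -/
def CWlt (aL aU bL bU : ℝ) : Prop := CWle aL aU bL bU ∧ (aL ≠ bL ∨ aU ≠ bU)

/-- Theorem 4.1, Euclidean case: KKT sufficiency for type-I
Pareto optimal solutions via the gH-difference condition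
`-(Σ λ_s φ_s'(p̄; p-p̄)) ⊖_g (Σ μ_u ψ_u'(p̄; p-p̄)) ≤_LU [0,0]`, stated through its
equivalent pair of min/max inequalities. -/

lemma dirDeriv_le_of_convexAt {V : Type*} [NormedAddCommGroup V] [NormedSpace ℝ V]
    {E : Set V} {f : V → ℝ} {pbar q : V} {d : ℝ}
    (hconv : ConvexAtPt E f pbar) (hq : q ∈ E)
    (hd : HasDirDeriv f pbar (q - pbar) d) :
    d ≤ f q - f pbar := by
  refine le_of_tendsto hd ?_
  filter_upwards [Ioc_mem_nhdsGT_of_mem (Set.left_mem_Ico.2 one_pos)] with α hα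
  have h1 : pbar + α • (q - pbar) = (1 - α) • pbar + α • q := by
    module
  rw [h1]
  have h2 := hconv q hq α (le_of_lt hα.1) hα.2
  rw [div_le_iff₀ hα.1]
  nlinarith [h2]

theorem kkt_type_I_gH_difference
    {V : Type*} [NormedAddCommGroup V] [NormedSpace ℝ V]
    (E : Set V) (hEne : E.Nonempty) (hEopen : IsOpen E) (hEconv : Convex ℝ E)
    (l t : ℕ) (φL φU : Fin l → V → ℝ) (ψ : Fin t → V → ℝ)
    (hφint : ∀ s, ∀ x ∈ E, φL s x ≤ φU s x)
    (pbar : V) (hpbarE : pbar ∈ E) (hpbarF : ∀ u, ψ u pbar ≤ 0)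
    (φL' φU' : Fin l → V → ℝ)
    (hφLd : ∀ s w, HasDirDeriv (φL s) pbar w (φL' s w))
    (hφUd : ∀ s w, HasDirDeriv (φU s) pbar w (φU' s w))
    (ψ' : Fin t → V → ℝ)
    (hψd : ∀ u w, HasDirDeriv (ψ u) pbar w (ψ' u w))
    (hφLc : ∀ s, ConvexAtPt E (φL s) pbar)
    (hφUc : ∀ s, ConvexAtPt E (φU s) pbar)
    (hψc : ∀ u, ConvexAtPt E (ψ u) pbar)
    (lam : Fin l → ℝ) (μ : Fin t → ℝ)
    (hlam : ∀ s, 0 < lam s) (hμ : ∀ u, 0 ≤ μ u)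
    (hkkt : ∀ p ∈ E,
      0 ≤ ∑ s, lam s * min (φL' s (p - pbar)) (φU' s (p - pbar))
          + ∑ u, μ u * ψ' u (p - pbar) ∧
      0 ≤ ∑ s, lam s * max (φL' s (p - pbar)) (φU' s (p - pbar))
          + ∑ u, μ u * ψ' u (p - pbar))
    (hcs : ∀ u, μ u * ψ u pbar = 0) :
    ¬ ∃ phat, (phat ∈ E ∧ ∀ u, ψ u phat ≤ 0) ∧
      (∀ s, LUle (φL s phat) (φU s phat) (φL s pbar) (φU s pbar)) ∧
      (∃ h, LUlt (φL h phat) (φU h phat) (φL h pbar) (φU h pbar)) := by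
  rintro ⟨phat, ⟨hpE, hpF⟩, hle, h, hlt⟩
  have hkkt1 := (hkkt phat hpE).1
  have hL : ∀ s, φL' s (phat - pbar) ≤ φL s phat - φL s pbar := fun s =>
    dirDeriv_le_of_convexAt (hφLc s) hpE (hφLd s _)
  have hU : ∀ s, φU' s (phat - pbar) ≤ φU s phat - φU s pbar := fun s =>
    dirDeriv_le_of_convexAt (hφUc s) hpE (hφUd s _)
  have hpsi : ∀ u, ψ' u (phat - pbar) ≤ ψ u phat - ψ u pbar := fun u =>
    dirDeriv_le_of_convexAt (hψc u) hpE (hψd u _)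
  have hsum2 : ∑ u, μ u * ψ' u (phat - pbar) ≤ 0 := by
    apply Finset.sum_nonpos
    intro u _
    have h1 : μ u * ψ' u (phat - pbar) ≤ μ u * (ψ u phat - ψ u pbar) :=
      mul_le_mul_of_nonneg_left (hpsi u) (hμ u)
    nlinarith [hpF u, hμ u, hcs u]
  have hsum1 : ∑ s, lam s * min (φL' s (phat - pbar)) (φU' s (phat - pbar)) < 0 := by
    have := Finset.sum_lt_sum (s := Finset.univ)
      (f := fun s => lam s * min (φL' s (phat - pbar)) (φU' s (phat - pbar)))
      (g := fun _ : Fin l => (0 : ℝ)) ?_ ?_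
    · simpa using this
    · intro s _
      have hmin : min (φL' s (phat - pbar)) (φU' s (phat - pbar)) ≤ 0 := by
        have := (hle s).1
        have := hL s
        exact le_trans (min_le_left _ _) (by linarith)
      exact mul_nonpos_of_nonneg_of_nonpos (le_of_lt (hlam s)) hmin
    · refine ⟨h, Finset.mem_univ h, ?_⟩
      have hmin : min (φL' h (phat - pbar)) (φU' h (phat - pbar)) < 0 := by
        rcases hlt.2 with hne | hne
        · have : φL h phat < φL h pbar := lt_of_le_of_ne hlt.1.1 hne
          exact lt_of_le_of_lt (min_le_left _ _) (by linarith [hL h])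
        · have : φU h phat < φU h pbar := lt_of_le_of_ne hlt.1.2 hne
          exact lt_of_le_of_lt (min_le_right _ _) (by linarith [hU h])
      exact mul_neg_of_pos_of_neg (hlam h) hmin
  linarith
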